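/- Let X be a finite set, Λ ⊂⊂ Z^d, ȳ_Λ a fixed outside configuration, I_m the set of m-sided cubes intersecting Λ, N = |I_m|, and Γ_{I_m} the block Gibbs sampler for q_Λ(·|ȳ_Λ) defined by the local specifications q_{I∩Λ}(·|ȳ_{I∩Λ}), I ∈ I_m. Then for any probability measure p_Λ = L(Y_Λ) on X^Λ, W_2²( p_Λ, p_ΛΓ_{I_m} ) ≤ (m^d / N²) · Σ_{I∈I_m} E W_2²( p_{I∩Λ}(·|Ȳ_{I∩Λ}), q_{I∩Λ}(·|Ȳ_{I∩Λ}) ). -/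

import Mathlib

open Finset

def IsPMF {α : Type*} [Fintype α] (p : α → ℝ) : Prop :=
  (∀ a, 0 ≤ p a) ∧ ∑ a, p a = 1

noncomputable def tv {α : Type*} [Fintype α] (r s : α → ℝ) : ℝ :=
  (∑ a, |r a - s a|) / 2

noncomputable def relEntE {α : Type*} [Fintype α] (r s : α → ℝ) : EReal :=
  ∑ a, if r a = 0 then (0 : EReal)
    else if s a = 0 then (⊤ : EReal)
    else ((r a * Real.log (r a / s a) : ℝ) : EReal)

noncomputable def W2sq {ι X : Type*} [Fintype ι] [DecidableEq ι] [Fintype X] [DecidableEq X]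
    (r s : (ι → X) → ℝ) : ℝ :=
  sInf { w : ℝ | ∃ π : (ι → X) × (ι → X) → ℝ,
    (∀ z, 0 ≤ π z) ∧ (∀ a, ∑ b, π (a, b) = r a) ∧ (∀ b, ∑ a, π (a, b) = s b) ∧
    w = ∑ i : ι, (∑ z : (ι → X) × (ι → X), if z.1 i ≠ z.2 i then π z else 0) ^ 2 }

def patchF {ι X : Type*} [DecidableEq ι] (I : Finset ι) (x : ι → X) (y : ↥I → X) : ι → X :=
  fun i => if h : i ∈ I then y ⟨i, h⟩ else x i

noncomputable def condF {ι X : Type*} [Fintype ι] [DecidableEq ι] [Fintype X]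
    (p : (ι → X) → ℝ) (I : Finset ι) (x : ι → X) : (↥I → X) → ℝ :=
  fun y => p (patchF I x y) / ∑ y' : ↥I → X, p (patchF I x y')

noncomputable def cond1 {ι X : Type*} [Fintype ι] [DecidableEq ι] [Fintype X]
    (p : (ι → X) → ℝ) (i : ι) (x : ι → X) : X → ℝ :=
  fun c => p (Function.update x i c) / ∑ c' : X, p (Function.update x i c')

noncomputable def gibbsStep {ι X : Type*} [Fintype ι] [DecidableEq ι] [Fintype X] [DecidableEq X]
    (q p : (ι → X) → ℝ) : (ι → X) → ℝ :=
  fun z => (1 / (Fintype.card ι : ℝ)) * ∑ i : ι, ∑ y : ι → X,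
    p y * (if Function.update y i (z i) = z then cond1 q i y (z i) else 0)
/-! ## Lattice spin systems -/

/-- Sites of the `d`-dimensional cubic lattice. -/
abbrev Site (d : ℕ) := Fin d → ℤ

/-- The sup-metric `ρ(k,i) = max_ν |k_ν − i_ν|` on `ℤ^d`. -/
def rho {d : ℕ} (k i : Site d) : ℕ :=
  Finset.univ.sup fun ν => (k ν - i ν).natAbs

/-- `ρ(k,M) = min_{i ∈ M} ρ(k,i)`. -/
noncomputable def rhoSet {d : ℕ} (k : Site d) (M : Finset (Site d)) : ℕ :=
  sInf {r : ℕ | ∃ i ∈ M, r = rho k i}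

/-- A compatible ensemble of local specifications `q_Λ(·|x̄_Λ)` on `X^{ℤ^d}`:
for each finite `Λ ⊂⊂ ℤ^d` and boundary configuration `x` (only its values outside `Λ`
matter) a probability distribution on configurations `↥Λ → X`, depending only on the
boundary values outside `Λ` and satisfying the natural compatibility conditions. -/
structure Ensemble (d : ℕ) (X : Type*) [Fintype X] [DecidableEq X] where
  q : (Λ : Finset (Site d)) → (Site d → X) → ({ i : Site d // i ∈ Λ } → X) → ℝ
  nonneg : ∀ (Λ : Finset (Site d)) (x : Site d → X) (y : ↥Λ → X), 0 ≤ q Λ x y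
  sum_one : ∀ (Λ : Finset (Site d)) (x : Site d → X), ∑ y : ↥Λ → X, q Λ x y = 1
  localDep : ∀ (Λ : Finset (Site d)) (x x' : Site d → X),
    (∀ i, i ∉ Λ → x i = x' i) → q Λ x = q Λ x'
  compatible : ∀ (M Λ : Finset (Site d)) (hM : M ⊆ Λ) (x : Site d → X) (y : ↥Λ → X),
    q Λ x y =
      (∑ y' : ↥Λ → X, if (∀ i : ↥Λ, (i : Site d) ∉ M → y' i = y i) then q Λ x y' else 0)
        * q M (fun i => if h : i ∈ Λ then y ⟨i, h⟩ else x i) (fun i => y ⟨i.1, hM i.2⟩)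

/-- The marginal on `M ⊆ Λ` of a measure on `X^Λ`. -/
noncomputable def marg {d : ℕ} {X : Type*} [Fintype X] [DecidableEq X]
    {M Λ : Finset (Site d)} (hM : M ⊆ Λ) (μ : (↥Λ → X) → ℝ) : (↥M → X) → ℝ :=
  fun yM => ∑ y : ↥Λ → X, if (∀ i : ↥M, y ⟨i.1, hM i.2⟩ = yM i) then μ y else 0

/-- The strong mixing condition with coupling function `φ`. -/
def StrongMixing {d : ℕ} {X : Type*} [Fintype X] [DecidableEq X]
    (Q : Ensemble d X) (φ : ℕ → ℝ) : Prop :=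
  ∀ (M Λ : Finset (Site d)) (hM : M ⊆ Λ) (x x' : Site d → X) (k : Site d),
    k ∉ Λ → (∀ j, j ≠ k → x j = x' j) →
    tv (marg hM (Q.q Λ x)) (marg hM (Q.q Λ x')) ≤ φ (rhoSet k M)

/-- The `m`-sided lattice cube with lower corner `a`. -/
noncomputable def cube {d : ℕ} (m : ℕ) (a : Site d) : Finset (Site d) :=
  Fintype.piFinset fun ν => Finset.Icc (a ν) (a ν + (m : ℤ) - 1)

/-- The lower corners of the `m`-sided cubes intersecting `Λ`; these corners index the
family `I_m = I_m(Λ)` of `m`-sided cubes that intersect `Λ`. -/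
noncomputable def corners {d : ℕ} (m : ℕ) (Λ : Finset (Site d)) : Finset (Site d) :=
  Λ.biUnion fun i => Fintype.piFinset fun ν => Finset.Icc (i ν - ((m : ℤ) - 1)) (i ν)

/-- `‖Φ‖ = Σ_{i ∈ ℤ^d} φ(ρ(0,i))`, the norm of the matrix `Φ = (φ(ρ(k,i)))`. -/
noncomputable def phiNorm (d : ℕ) (φ : ℕ → ℝ) : ℝ :=
  ∑' i : Site d, φ (rho 0 i)

/-- `Θ_m = min_R [ ‖Φ‖·(d·R)/m + 2d·Σ_{r≥R} (2r+1)^{d−1} φ(r) ]`. -/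
noncomputable def Theta (d m : ℕ) (φ : ℕ → ℝ) : ℝ :=
  sInf { t : ℝ | ∃ R : ℕ,
    t = phiNorm d φ * (d * R) / m
      + 2 * d * ∑' r : ℕ, (if R ≤ r then ((2 * (r : ℝ) + 1)) ^ (d - 1) * φ r else 0) }

/-- The intersection `I ∩ Λ` (as a finset of `↥Λ`) of the `m`-sided cube with corner `a`
with `Λ`. -/
noncomputable def blockIn {d : ℕ} (Λ : Finset (Site d)) (m : ℕ) (a : Site d) : Finset ↥Λ :=
  Λ.attach.filter fun i => (i : Site d) ∈ cube m a

/-- One step of the block Gibbs sampler `Γ_{I_m}` for the measure `q_Λ(·|ȳ_Λ)`: a cube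
`I ∈ I_m` is selected uniformly at random, and the coordinates in `I ∩ Λ` are updated
according to the local specification `q_{I∩Λ}(·|ȳ_{I∩Λ})`. -/
noncomputable def cubeGibbsStep {d : ℕ} {X : Type*} [Fintype X] [DecidableEq X]
    (Q : Ensemble d X) (Λ : Finset (Site d)) (ybar : Site d → X) (m : ℕ)
    (p : (↥Λ → X) → ℝ) : (↥Λ → X) → ℝ :=
  fun z => (1 / ((corners m Λ).card : ℝ)) * ∑ a ∈ corners m Λ, ∑ y : ↥Λ → X,
    p y * (if ∀ i : ↥Λ, i ∉ blockIn Λ m a → z i = y i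
           then condF (Q.q Λ ybar) (blockIn Λ m a) y (fun i => z i.1) else 0)

/-- The ensemble has finite range of interaction `R`: `q_Λ(·|x̄_Λ)` depends only on the
boundary coordinates `x_k` with `ρ(k,Λ) ≤ R`. -/
def FiniteRange {d : ℕ} {X : Type*} [Fintype X] [DecidableEq X]
    (Q : Ensemble d X) (R : ℕ) : Prop :=
  ∀ (Λ : Finset (Site d)) (x x' : Site d → X),
    (∀ j, rhoSet j Λ ≤ R → x j = x' j) → Q.q Λ x = Q.q Λ x'

set_option linter.unusedSectionVars false
set_option maxHeartbeats 1000000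

section W2helpers
variable {ι X : Type*} [Fintype ι] [DecidableEq ι] [Fintype X] [DecidableEq X]

lemma patch_out (I : Finset ι) (x : ι → X) (w : ↥I → X) {i : ι} (h : i ∉ I) :
    patchF I x w i = x i := by simp [patchF, h]

lemma patch_in (I : Finset ι) (x : ι → X) (w : ↥I → X) {i : ι} (h : i ∈ I) :
    patchF I x w i = w ⟨i, h⟩ := by simp [patchF, h]

lemma restrict_patch (I : Finset ι) (x : ι → X) (w : ↥I → X) :
    (fun j : ↥I => patchF I x w j.1) = w := by
  funext j; simp [patchF, j.2]

lemma patch_restrict (I : Finset ι) {x u : ι → X} (h : ∀ i, i ∉ I → u i = x i) :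
    patchF I x (fun j : ↥I => u j.1) = u := by
  funext i
  by_cases hi : i ∈ I
  · simp [patchF, hi]
  · simp [patchF, hi, h i hi]

lemma patch_congr (I : Finset ι) {x x' : ι → X} (h : ∀ i, i ∉ I → x i = x' i)
    (w : ↥I → X) : patchF I x w = patchF I x' w := by
  funext i
  by_cases hi : i ∈ I
  · simp [patchF, hi]
  · simp [patchF, hi, h i hi]

/-- Sum over a fiber re-indexed by configurations on `I`. -/
lemma sum_fiber (I : Finset ι) (y : ι → X) (f : (ι → X) → ℝ) :
    ∑ u : ι → X, (if ∀ i, i ∉ I → u i = y i then f u else 0)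
      = ∑ w : ↥I → X, f (patchF I y w) := by
  classical
  rw [Finset.sum_ite, Finset.sum_const_zero, add_zero]
  apply Finset.sum_nbij' (i := fun u => fun j : ↥I => u j.1)
    (j := fun w => patchF I y w)
  · intro u hu; exact Finset.mem_univ _
  · intro w hw
    simp only [Finset.mem_filter, Finset.mem_univ, true_and]
    intro i hi; exact patch_out I y w hi
  · intro u hu
    simp only [Finset.mem_filter, Finset.mem_univ, true_and] at hu
    exact patch_restrict I hu
  · intro w hw; exact restrict_patch I y w
  · intro u hu
    simp only [Finset.mem_filter, Finset.mem_univ, true_and] at hu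
    rw [patch_restrict I hu]

lemma sum_fiber' (I : Finset ι) (y : ι → X) (g : (↥I → X) → ℝ) :
    ∑ u : ι → X, (if ∀ i, i ∉ I → u i = y i then g (fun j : ↥I => u j.1) else 0)
      = ∑ w : ↥I → X, g w := by
  rw [sum_fiber I y (fun u => g (fun j : ↥I => u j.1))]
  exact Finset.sum_congr rfl fun w _ => by rw [restrict_patch]

lemma sum_fiber2 (I : Finset ι) (y : ι → X) (g : (↥I → X) → (↥I → X) → ℝ) :
    ∑ z : ι → X, ∑ u : ι → X,
      (if (∀ j, j ∉ I → z j = y j) ∧ (∀ j, j ∉ I → u j = y j)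
       then g (fun j : ↥I => z j.1) (fun j : ↥I => u j.1) else 0)
      = ∑ v : ↥I → X, ∑ w : ↥I → X, g v w := by
  classical
  have step : ∀ z : ι → X,
      ∑ u : ι → X, (if (∀ j, j ∉ I → z j = y j) ∧ (∀ j, j ∉ I → u j = y j)
        then g (fun j : ↥I => z j.1) (fun j : ↥I => u j.1) else 0)
      = (if ∀ j, j ∉ I → z j = y j
         then ∑ w : ↥I → X, g (fun j : ↥I => z j.1) w else 0) := by
    intro z
    by_cases hz : ∀ j, j ∉ I → z j = y j
    · rw [if_pos hz]
      have hpt : ∀ u : ι → X,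
          (if (∀ j, j ∉ I → z j = y j) ∧ (∀ j, j ∉ I → u j = y j)
            then g (fun j : ↥I => z j.1) (fun j : ↥I => u j.1) else 0)
          = (if (∀ j, j ∉ I → u j = y j)
            then g (fun j : ↥I => z j.1) (fun j : ↥I => u j.1) else 0) := fun u => by
        by_cases hu : ∀ j, j ∉ I → u j = y j
        · rw [if_pos ⟨hz, hu⟩, if_pos hu]
        · rw [if_neg (fun hc => hu hc.2), if_neg hu]
      rw [Finset.sum_congr rfl fun u _ => hpt u]
      exact sum_fiber' I y (fun w => g (fun j : ↥I => z j.1) w)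
    · simp [hz]
  rw [Finset.sum_congr rfl fun z _ => step z]
  exact sum_fiber' I y (fun v => ∑ w : ↥I → X, g v w)

lemma condF_nonneg {p : (ι → X) → ℝ} (hp : ∀ z, 0 ≤ p z) (I : Finset ι) (x : ι → X)
    (w : ↥I → X) : 0 ≤ condF p I x w :=
  div_nonneg (hp _) (Finset.sum_nonneg fun _ _ => hp _)

lemma sum_condF {p : (ι → X) → ℝ} (I : Finset ι) (x : ι → X)
    (hD : ∑ w : ↥I → X, p (patchF I x w) ≠ 0) :
    ∑ w : ↥I → X, condF p I x w = 1 := by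
  unfold condF
  rw [← Finset.sum_div, div_self hD]

lemma condF_congr {p : (ι → X) → ℝ} (I : Finset ι) {x x' : ι → X}
    (h : ∀ i, i ∉ I → x i = x' i) : condF p I x = condF p I x' := by
  funext w
  unfold condF
  rw [patch_congr I h]
  congr 1
  exact Finset.sum_congr rfl fun w' _ => by rw [patch_congr I h]

lemma W2sq_nonneg (r s : (ι → X) → ℝ) : 0 ≤ W2sq r s := by
  apply Real.sInf_nonneg
  rintro w ⟨π, -, -, -, rfl⟩
  exact Finset.sum_nonneg fun i _ => sq_nonneg _

lemma W2sq_zero_of_sum_ne (r s : (ι → X) → ℝ)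
    (h : ∑ a, r a ≠ ∑ b, s b) : W2sq r s = 0 := by
  have hemp : { w : ℝ | ∃ π : (ι → X) × (ι → X) → ℝ,
      (∀ z, 0 ≤ π z) ∧ (∀ a, ∑ b, π (a, b) = r a) ∧ (∀ b, ∑ a, π (a, b) = s b) ∧
      w = ∑ i : ι, (∑ z : (ι → X) × (ι → X), if z.1 i ≠ z.2 i then π z else 0) ^ 2 } = ∅ := by
    ext w
    simp only [Set.mem_setOf_eq, Set.mem_empty_iff_false, iff_false]
    rintro ⟨π, hpos, h1, h2, -⟩
    apply h
    calc ∑ a, r a = ∑ a, ∑ b, π (a, b) := by simp [h1]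
    _ = ∑ b, ∑ a, π (a, b) := Finset.sum_comm
    _ = ∑ b, s b := by simp [h2]
  rw [W2sq, hemp, Real.sInf_empty]

lemma W2sq_le (r s : (ι → X) → ℝ) (π : (ι → X) × (ι → X) → ℝ)
    (hpos : ∀ z, 0 ≤ π z) (h1 : ∀ a, ∑ b, π (a, b) = r a) (h2 : ∀ b, ∑ a, π (a, b) = s b) :
    W2sq r s ≤ ∑ i : ι, (∑ z : (ι → X) × (ι → X), if z.1 i ≠ z.2 i then π z else 0) ^ 2 := by
  apply csInf_le
  · exact ⟨0, by rintro w ⟨π', -, -, -, rfl⟩; exact Finset.sum_nonneg fun i _ => sq_nonneg _⟩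
  · exact ⟨π, hpos, h1, h2, rfl⟩

lemma exists_coupling (r s : (ι → X) → ℝ) (hr : IsPMF r) (hs : IsPMF s) {ε : ℝ} (hε : 0 < ε) :
    ∃ π : (ι → X) × (ι → X) → ℝ,
      (∀ z, 0 ≤ π z) ∧ (∀ a, ∑ b, π (a, b) = r a) ∧ (∀ b, ∑ a, π (a, b) = s b) ∧
      ∑ i : ι, (∑ z : (ι → X) × (ι → X), if z.1 i ≠ z.2 i then π z else 0) ^ 2
        < W2sq r s + ε := by
  have hne : { w : ℝ | ∃ π : (ι → X) × (ι → X) → ℝ,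
      (∀ z, 0 ≤ π z) ∧ (∀ a, ∑ b, π (a, b) = r a) ∧ (∀ b, ∑ a, π (a, b) = s b) ∧
      w = ∑ i : ι, (∑ z : (ι → X) × (ι → X), if z.1 i ≠ z.2 i then π z else 0) ^ 2 }.Nonempty := by
    refine ⟨_, ⟨fun z => r z.1 * s z.2, fun z => mul_nonneg (hr.1 _) (hs.1 _),
      fun a => by simp only []; rw [← Finset.mul_sum, hs.2, mul_one],
      fun b => by simp only []; rw [← Finset.sum_mul, hr.2, one_mul], rfl⟩⟩
  obtain ⟨w, ⟨π, hpos, h1, h2, rfl⟩, hw⟩ := Real.lt_sInf_add_pos hne hε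
  exact ⟨π, hpos, h1, h2, hw⟩

lemma swap3 {β γ α : Type*} [Fintype α] [Fintype γ] (s : Finset β) (g : β → γ → α → ℝ) :
    ∑ x : α, ∑ a ∈ s, ∑ y : γ, g a y x = ∑ a ∈ s, ∑ y : γ, ∑ x : α, g a y x := by
  rw [Finset.sum_comm]
  exact Finset.sum_congr rfl fun a _ => Finset.sum_comm

end W2helpers

lemma card_filter_cube {d : ℕ} (m : ℕ) (Λ : Finset (Site d)) (i : Site d) :
    ((corners m Λ).filter fun a => i ∈ cube m a).card ≤ m ^ d := by
  classical
  have hsub : ((corners m Λ).filter fun a => i ∈ cube m a) ⊆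
      Fintype.piFinset fun ν => Finset.Icc (i ν - ((m : ℤ) - 1)) (i ν) := by
    intro a ha
    rw [Finset.mem_filter] at ha
    rw [Fintype.mem_piFinset]
    intro ν
    have h2 := ha.2
    rw [cube, Fintype.mem_piFinset] at h2
    have hν := h2 ν
    rw [Finset.mem_Icc] at hν ⊢
    omega
  calc ((corners m Λ).filter fun a => i ∈ cube m a).card
      ≤ (Fintype.piFinset fun ν => Finset.Icc (i ν - ((m : ℤ) - 1)) (i ν)).card :=
        Finset.card_le_card hsub
    _ = ∏ ν : Fin d, (Finset.Icc (i ν - ((m : ℤ) - 1)) (i ν)).card :=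
        Fintype.card_piFinset _
    _ = ∏ _ν : Fin d, m := by
        refine Finset.prod_congr rfl fun ν _ => ?_
        rw [Int.card_Icc]
        omega
    _ = m ^ d := by rw [Finset.prod_const, Finset.card_univ, Fintype.card_fin]

lemma corners_empty_of_m_zero {d : ℕ} (hd : 0 < d) (Λ : Finset (Site d)) :
    corners 0 Λ = ∅ := by
  classical
  rw [Finset.eq_empty_iff_forall_notMem]
  intro a ha
  rw [corners, Finset.mem_biUnion] at ha
  obtain ⟨j, -, ha⟩ := ha
  rw [Fintype.mem_piFinset] at ha
  have h0 := ha ⟨0, hd⟩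
  rw [Finset.mem_Icc] at h0
  omega

/-- inequality (4.2.14): the `W₂` distance between `p_Λ` and one step of
the block Gibbs sampler started from `p_Λ`. -/
theorem W2sq_self_cubeGibbsStep {d : ℕ} {X : Type*} [Fintype X] [DecidableEq X]
    (Q : Ensemble d X) (Λ : Finset (Site d)) (ybar : Site d → X) (m : ℕ)
    (p : (↥Λ → X) → ℝ) (hp : IsPMF p) :
    W2sq p (cubeGibbsStep Q Λ ybar m p) ≤
      ((m : ℝ) ^ d / ((corners m Λ).card : ℝ) ^ 2) *
        ∑ a ∈ corners m Λ, ∑ y : ↥Λ → X, p y *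
          W2sq (condF p (blockIn Λ m a) y) (condF (Q.q Λ ybar) (blockIn Λ m a) y) := by
  classical
  obtain ⟨hp0, hp1⟩ := hp
  set q : (↥Λ → X) → ℝ := Q.q Λ ybar with hqdef
  have hq0 : ∀ z, 0 ≤ q z := Q.nonneg Λ ybar
  set C : Finset (Site d) := corners m Λ with hCdef
  set B : Site d → Finset ↥Λ := blockIn Λ m with hBdef
  set pG : (↥Λ → X) → ℝ := cubeGibbsStep Q Λ ybar m p with hpGdef
  set N : ℝ := ((C.card : ℕ) : ℝ) with hNdef
  set RHS : ℝ := ((m : ℝ) ^ d / N ^ 2) * ∑ a ∈ C, ∑ y : ↥Λ → X, p y *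
      W2sq (condF p (B a) y) (condF q (B a) y) with hRHSdef
  show W2sq p pG ≤ RHS
  set Dq : Site d → (↥Λ → X) → ℝ := fun a y => ∑ w : ↥(B a) → X, q (patchF (B a) y w)
    with hDqdef
  set Dp : Site d → (↥Λ → X) → ℝ := fun a y => ∑ w : ↥(B a) → X, p (patchF (B a) y w)
    with hDpdef
  clear_value q C B pG N RHS Dq Dp
  have hRHS0 : 0 ≤ RHS := by
    rw [hRHSdef]
    exact mul_nonneg (div_nonneg (pow_nonneg (Nat.cast_nonneg m) d) (sq_nonneg N))
      (Finset.sum_nonneg fun a _ => Finset.sum_nonneg fun y _ =>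
        mul_nonneg (hp0 y) (W2sq_nonneg _ _))
  have hsum_inner : ∀ (a : Site d) (y : ↥Λ → X),
      (∑ u : ↥Λ → X, if ∀ i : ↥Λ, i ∉ B a → u i = y i
        then condF q (B a) y (fun j => u j.1) else 0) = Dq a y / Dq a y := by
    intro a y
    rw [sum_fiber' (B a) y (condF q (B a) y)]
    unfold condF
    rw [← Finset.sum_div]
    simp only [hDqdef]
  have hsum_pG : ∑ u : ↥Λ → X, pG u
      = (1 / N) * ∑ a ∈ C, ∑ y : ↥Λ → X, p y * (Dq a y / Dq a y) := by
    rw [hpGdef]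
    unfold cubeGibbsStep
    rw [← hqdef, ← hCdef, ← hBdef, ← Finset.mul_sum, ← hNdef]
    congr 1
    rw [swap3 C (fun (a : Site d) (y u : ↥Λ → X) => p y * (if ∀ i : ↥Λ, i ∉ B a → u i = y i
        then condF q (B a) y (fun j => u j.1) else 0))]
    refine Finset.sum_congr rfl fun a _ => Finset.sum_congr rfl fun y _ => ?_
    rw [← Finset.mul_sum, hsum_inner a y]
  by_cases hC0 : C.card = 0
  · have hCe : C = ∅ := Finset.card_eq_zero.mp hC0
    have hz : ∑ u : ↥Λ → X, pG u = 0 := by rw [hsum_pG, hCe]; simp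
    rw [W2sq_zero_of_sum_ne p pG (by rw [hp1, hz]; norm_num)]
    exact hRHS0
  have hNpos : 0 < N := by
    rw [hNdef]; exact_mod_cast Nat.pos_of_ne_zero hC0
  have hdivle : ∀ x : ℝ, x / x ≤ 1 := by
    intro x
    rcases eq_or_ne x 0 with h | h
    · simp [h]
    · rw [div_self h]
  by_cases hbad : ∃ a ∈ C, ∃ y : ↥Λ → X, 0 < p y ∧ Dq a y = 0
  · obtain ⟨a0, ha0, y0, hy0, hD0⟩ := hbad
    have hbound : ∀ (a : Site d) (y : ↥Λ → X), p y * (Dq a y / Dq a y) ≤ p y := by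
      intro a y
      calc p y * (Dq a y / Dq a y) ≤ p y * 1 :=
            mul_le_mul_of_nonneg_left (hdivle _) (hp0 y)
        _ = p y := mul_one _
    have hinner : ∀ a ∈ C, ∑ y : ↥Λ → X, p y * (Dq a y / Dq a y) ≤ 1 := by
      intro a _
      calc ∑ y : ↥Λ → X, p y * (Dq a y / Dq a y) ≤ ∑ y : ↥Λ → X, p y :=
            Finset.sum_le_sum fun y _ => hbound a y
        _ = 1 := hp1
    have hstrict : ∑ y : ↥Λ → X, p y * (Dq a0 y / Dq a0 y) < 1 := by
      rw [← hp1]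
      refine Finset.sum_lt_sum (fun y _ => hbound a0 y) ⟨y0, Finset.mem_univ y0, ?_⟩
      rw [hD0]
      simpa using hy0
    have hlt : ∑ u : ↥Λ → X, pG u < 1 := by
      rw [hsum_pG]
      have h1 : ∑ a ∈ C, ∑ y : ↥Λ → X, p y * (Dq a y / Dq a y) < ∑ a ∈ C, (1:ℝ) :=
        Finset.sum_lt_sum hinner ⟨a0, ha0, hstrict⟩
      have h2 : ∑ a ∈ C, (1:ℝ) = N := by rw [Finset.sum_const, hNdef]; simp
      calc (1 / N) * ∑ a ∈ C, ∑ y : ↥Λ → X, p y * (Dq a y / Dq a y)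
          < (1 / N) * N := by
            apply mul_lt_mul_of_pos_left _ (one_div_pos.mpr hNpos)
            rw [← h2]; exact h1
        _ = 1 := one_div_mul_cancel (ne_of_gt hNpos)
    rw [W2sq_zero_of_sum_ne p pG (by rw [hp1]; exact (ne_of_gt hlt))]
    exact hRHS0
  push_neg at hbad
  have hmd : (0:ℝ) < (m:ℝ)^d := by
    rcases Nat.eq_zero_or_pos m with hm | hm
    · rcases Nat.eq_zero_or_pos d with hd | hd
      · subst hd; rw [pow_zero]; norm_num
      · exfalso
        apply hC0
        rw [hCdef, hm, corners_empty_of_m_zero hd Λ, Finset.card_empty]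
    · exact pow_pos (by exact_mod_cast hm) d
  have hDppos : ∀ (a : Site d) (y : ↥Λ → X), 0 < p y → 0 < Dp a y := by
    intro a y hy
    have hpy : patchF (B a) y (fun j : ↥(B a) => y j.1) = y :=
      patch_restrict _ (fun i _ => rfl)
    rw [hDpdef]
    show 0 < ∑ w : ↥(B a) → X, p (patchF (B a) y w)
    refine lt_of_lt_of_le hy ?_
    calc p y = p (patchF (B a) y fun j => y j.1) := by rw [hpy]
      _ ≤ ∑ w : ↥(B a) → X, p (patchF (B a) y w) :=
          Finset.single_le_sum (fun w _ => hp0 _) (Finset.mem_univ _)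
  have key : ∀ ε : ℝ, 0 < ε → W2sq p pG ≤ RHS + ((m:ℝ)^d / N) * ε := by
    intro ε hε
    -- near-optimal couplings for the conditional distributions
    have hex : ∀ (a : Site d) (y : ↥Λ → X),
        ∃ κ : ((↥(B a) → X) × (↥(B a) → X)) → ℝ,
          (∀ vw, 0 ≤ κ vw) ∧
          ((a ∈ C ∧ 0 < p y) →
            ((∀ v, ∑ w : ↥(B a) → X, κ (v, w) = condF p (B a) y v) ∧
             (∀ w, ∑ v : ↥(B a) → X, κ (v, w) = condF q (B a) y w) ∧
             ∑ j : ↥(B a), (∑ vw : (↥(B a) → X) × (↥(B a) → X),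
                 if vw.1 j ≠ vw.2 j then κ vw else 0) ^ 2
               < W2sq (condF p (B a) y) (condF q (B a) y) + ε)) := by
      intro a y
      by_cases h : a ∈ C ∧ 0 < p y
      · have hDp' : ∑ w : ↥(B a) → X, p (patchF (B a) y w) ≠ 0 := by
          have h2 := hDppos a y h.2
          simp only [hDpdef] at h2
          exact ne_of_gt h2
        have hDq' : ∑ w : ↥(B a) → X, q (patchF (B a) y w) ≠ 0 := by
          have h2 := hbad a h.1 y h.2
          simp only [hDqdef] at h2
          exact h2
        have hp' : IsPMF (condF p (B a) y) :=
          ⟨fun v => condF_nonneg hp0 _ _ v, sum_condF _ _ hDp'⟩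
        have hq' : IsPMF (condF q (B a) y) :=
          ⟨fun w => condF_nonneg hq0 _ _ w, sum_condF _ _ hDq'⟩
        obtain ⟨κ, h1, h2, h3, h4⟩ := exists_coupling _ _ hp' hq' hε
        exact ⟨κ, h1, fun _ => ⟨h2, h3, h4⟩⟩
      · exact ⟨fun _ => 0, fun _ => le_refl 0, fun hc => absurd hc h⟩
    choose κ hκ0 hκ using hex
    -- the global coupling
    set π : ((↥Λ → X) × (↥Λ → X)) → ℝ := fun zu =>
      (1 / N) * ∑ a ∈ C, ∑ y : ↥Λ → X, p y *
        (if (∀ i : ↥Λ, i ∉ B a → zu.1 i = y i) ∧ (∀ i : ↥Λ, i ∉ B a → zu.2 i = y i)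
         then κ a y (fun j => zu.1 j.1, fun j => zu.2 j.1) else 0) with hπdef
    have hπ0 : ∀ zu, 0 ≤ π zu := by
      intro zu
      simp only [hπdef]
      refine mul_nonneg (le_of_lt (one_div_pos.mpr hNpos)) ?_
      refine Finset.sum_nonneg fun a _ => Finset.sum_nonneg fun y _ =>
        mul_nonneg (hp0 y) ?_
      split
      · exact hκ0 a y _
      · exact le_refl 0
    -- first marginal
    have hmarg1 : ∀ z, ∑ u : ↥Λ → X, π (z, u) = p z := by
      intro z
      have e1 : ∑ u : ↥Λ → X, π (z, u)
          = (1/N) * ∑ a ∈ C, ∑ y : ↥Λ → X, ∑ u : ↥Λ → X, p y *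
            (if (∀ i : ↥Λ, i ∉ B a → z i = y i) ∧ (∀ i : ↥Λ, i ∉ B a → u i = y i)
             then κ a y (fun j => z j.1, fun j => u j.1) else 0) := by
        simp only [hπdef]
        rw [← Finset.mul_sum]
        congr 1
        rw [swap3 C (fun (a : Site d) (y u : ↥Λ → X) => p y *
          (if (∀ i : ↥Λ, i ∉ B a → z i = y i) ∧ (∀ i : ↥Λ, i ∉ B a → u i = y i)
           then κ a y (fun j => z j.1, fun j => u j.1) else 0))]
      rw [e1]
      have e2 : ∀ a ∈ C, ∀ y : ↥Λ → X, (∑ u : ↥Λ → X, p y *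
            (if (∀ i : ↥Λ, i ∉ B a → z i = y i) ∧ (∀ i : ↥Λ, i ∉ B a → u i = y i)
             then κ a y (fun j => z j.1, fun j => u j.1) else 0))
          = (if (∀ i : ↥Λ, i ∉ B a → y i = z i) then p y else 0) * (p z / Dp a z) := by
        intro a ha y
        rw [← Finset.mul_sum]
        have hflip : (∀ i : ↥Λ, i ∉ B a → z i = y i) ↔ (∀ i : ↥Λ, i ∉ B a → y i = z i) :=
          ⟨fun h i hi => (h i hi).symm, fun h i hi => (h i hi).symm⟩
        by_cases hP : ∀ i : ↥Λ, i ∉ B a → z i = y i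
        · have e3 : (∑ u : ↥Λ → X,
              (if (∀ i : ↥Λ, i ∉ B a → z i = y i) ∧ (∀ i : ↥Λ, i ∉ B a → u i = y i)
               then κ a y (fun j => z j.1, fun j => u j.1) else 0))
              = ∑ w : ↥(B a) → X, κ a y (fun j => z j.1, w) := by
            have hpt : ∀ u : ↥Λ → X,
                (if (∀ i : ↥Λ, i ∉ B a → z i = y i) ∧ (∀ i : ↥Λ, i ∉ B a → u i = y i)
                 then κ a y (fun j => z j.1, fun j => u j.1) else 0)
                = (if (∀ i : ↥Λ, i ∉ B a → u i = y i)
                   then κ a y (fun j => z j.1, fun j => u j.1) else 0) := by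
              intro u
              by_cases hu : ∀ i : ↥Λ, i ∉ B a → u i = y i
              · rw [if_pos ⟨hP, hu⟩, if_pos hu]
              · rw [if_neg fun hc => hu hc.2, if_neg hu]
            rw [Finset.sum_congr rfl fun u _ => hpt u]
            exact sum_fiber' (B a) y (fun v => κ a y (fun j => z j.1, v))
          rw [e3]
          rcases eq_or_lt_of_le (hp0 y) with h0 | h0
          · rw [← h0]
            simp
          · rw [(hκ a y ⟨ha, h0⟩).1 (fun j => z j.1)]
            rw [if_pos (hflip.mp hP)]
            have e4 : condF p (B a) y (fun j => z j.1) = p z / Dp a z := by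
              rw [condF_congr (B a) (fun i hi => (hP i hi).symm)]
              unfold condF
              rw [patch_restrict (B a) (fun i _ => rfl)]
              simp only [hDpdef]
            rw [e4]
        · rw [if_neg (fun h => hP (hflip.mpr h))]
          have e5 : (∑ u : ↥Λ → X,
              (if (∀ i : ↥Λ, i ∉ B a → z i = y i) ∧ (∀ i : ↥Λ, i ∉ B a → u i = y i)
               then κ a y (fun j => z j.1, fun j => u j.1) else 0)) = 0 :=
            Finset.sum_eq_zero fun u _ => if_neg (fun hc => hP hc.1)
          rw [e5]
          simp
      rw [Finset.sum_congr rfl fun a ha => Finset.sum_congr rfl fun y hy => e2 a ha y]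
      have e6 : ∀ a ∈ C, (∑ y : ↥Λ → X,
          (if (∀ i : ↥Λ, i ∉ B a → y i = z i) then p y else 0) * (p z / Dp a z)) = p z := by
        intro a _
        rw [← Finset.sum_mul, sum_fiber (B a) z p]
        have hDpz : ∑ w : ↥(B a) → X, p (patchF (B a) z w) = Dp a z := by
          simp only [hDpdef]
        rw [hDpz]
        rcases eq_or_ne (Dp a z) 0 with hD | hD
        · have h1 : p z ≤ Dp a z := by
            have hpz' : patchF (B a) z (fun j : ↥(B a) => z j.1) = z :=
              patch_restrict _ (fun i _ => rfl)
            calc p z = p (patchF (B a) z fun j => z j.1) := by rw [hpz']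
              _ ≤ ∑ w : ↥(B a) → X, p (patchF (B a) z w) :=
                  Finset.single_le_sum (fun w _ => hp0 _) (Finset.mem_univ _)
              _ = Dp a z := by simp only [hDpdef]
          have hpz : p z = 0 := le_antisymm (hD ▸ h1) (hp0 z)
          rw [hD, hpz]
          simp
        · rw [mul_comm, div_mul_cancel₀ _ hD]
      rw [Finset.sum_congr rfl e6, Finset.sum_const, nsmul_eq_mul, ← hNdef,
        ← mul_assoc, one_div_mul_cancel (ne_of_gt hNpos), one_mul]
    -- second marginal
    have hmarg2 : ∀ u, ∑ z : ↥Λ → X, π (z, u) = pG u := by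
      intro u
      have e1 : ∑ z : ↥Λ → X, π (z, u)
          = (1/N) * ∑ a ∈ C, ∑ y : ↥Λ → X, ∑ z : ↥Λ → X, p y *
            (if (∀ i : ↥Λ, i ∉ B a → z i = y i) ∧ (∀ i : ↥Λ, i ∉ B a → u i = y i)
             then κ a y (fun j => z j.1, fun j => u j.1) else 0) := by
        simp only [hπdef]
        rw [← Finset.mul_sum]
        congr 1
        rw [swap3 C (fun (a : Site d) (y z : ↥Λ → X) => p y *
          (if (∀ i : ↥Λ, i ∉ B a → z i = y i) ∧ (∀ i : ↥Λ, i ∉ B a → u i = y i)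
           then κ a y (fun j => z j.1, fun j => u j.1) else 0))]
      rw [e1]
      have e2 : ∀ a ∈ C, ∀ y : ↥Λ → X, (∑ z : ↥Λ → X, p y *
            (if (∀ i : ↥Λ, i ∉ B a → z i = y i) ∧ (∀ i : ↥Λ, i ∉ B a → u i = y i)
             then κ a y (fun j => z j.1, fun j => u j.1) else 0))
          = p y * (if (∀ i : ↥Λ, i ∉ B a → u i = y i)
              then condF q (B a) y (fun j => u j.1) else 0) := by
        intro a ha y
        rcases eq_or_lt_of_le (hp0 y) with h0 | h0
        · rw [← h0]
          simp
        · rw [← Finset.mul_sum]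
          congr 1
          by_cases hQ : ∀ i : ↥Λ, i ∉ B a → u i = y i
          · rw [if_pos hQ]
            have hpt : ∀ z : ↥Λ → X,
                (if (∀ i : ↥Λ, i ∉ B a → z i = y i) ∧ (∀ i : ↥Λ, i ∉ B a → u i = y i)
                 then κ a y (fun j => z j.1, fun j => u j.1) else 0)
                = (if (∀ i : ↥Λ, i ∉ B a → z i = y i)
                   then κ a y (fun j => z j.1, fun j => u j.1) else 0) := by
              intro z
              by_cases hz : ∀ i : ↥Λ, i ∉ B a → z i = y i
              · rw [if_pos ⟨hz, hQ⟩, if_pos hz]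
              · rw [if_neg fun hc => hz hc.1, if_neg hz]
            rw [Finset.sum_congr rfl fun z _ => hpt z]
            rw [sum_fiber' (B a) y (fun v => κ a y (v, fun j => u j.1))]
            exact (hκ a y ⟨ha, h0⟩).2.1 (fun j => u j.1)
          · rw [if_neg hQ]
            exact Finset.sum_eq_zero fun z _ => if_neg fun hc => hQ hc.2
      rw [Finset.sum_congr rfl fun a ha => Finset.sum_congr rfl fun y hy => e2 a ha y]
      rw [hpGdef]
      unfold cubeGibbsStep
      rw [← hqdef, ← hCdef, ← hBdef, ← hNdef]
    -- per-site discrepancy of the coupling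
    set cB : Site d → (↥Λ → X) → ↥Λ → ℝ := fun a y i =>
      if h : i ∈ B a then
        ∑ vw : (↥(B a) → X) × (↥(B a) → X),
          (if vw.1 ⟨i, h⟩ ≠ vw.2 ⟨i, h⟩ then κ a y vw else 0)
      else 0 with hcBdef
    set T : Site d → ↥Λ → ℝ := fun a i => ∑ y : ↥Λ → X, p y * cB a y i with hTdef
    have hcB0 : ∀ a y i, 0 ≤ cB a y i := by
      intro a y i
      simp only [hcBdef]
      split
      · refine Finset.sum_nonneg fun vw _ => ?_
        split
        · exact hκ0 a y vw
        · exact le_refl 0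
      · exact le_refl 0
    have hEterm : ∀ (i : ↥Λ) (a : Site d) (y : ↥Λ → X),
        (∑ z : ↥Λ → X, ∑ u : ↥Λ → X,
          (if z i ≠ u i then
            (if (∀ j : ↥Λ, j ∉ B a → z j = y j) ∧ (∀ j : ↥Λ, j ∉ B a → u j = y j)
             then κ a y (fun j => z j.1, fun j => u j.1) else 0) else 0))
        = cB a y i := by
      intro i a y
      by_cases h : i ∈ B a
      · have e1 : (∑ z : ↥Λ → X, ∑ u : ↥Λ → X,
            (if z i ≠ u i then
              (if (∀ j : ↥Λ, j ∉ B a → z j = y j) ∧ (∀ j : ↥Λ, j ∉ B a → u j = y j)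
               then κ a y (fun j => z j.1, fun j => u j.1) else 0) else 0))
            = ∑ v : ↥(B a) → X, ∑ w : ↥(B a) → X,
              (if v ⟨i, h⟩ ≠ w ⟨i, h⟩ then κ a y (v, w) else 0) := by
          refine Eq.trans ?_ (sum_fiber2 (B a) y
            (fun v w => if v ⟨i, h⟩ ≠ w ⟨i, h⟩ then κ a y (v, w) else 0))
          refine Finset.sum_congr rfl fun z _ => Finset.sum_congr rfl fun u _ => ?_
          show (if z i ≠ u i then
              (if (∀ j : ↥Λ, j ∉ B a → z j = y j) ∧ (∀ j : ↥Λ, j ∉ B a → u j = y j)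
               then κ a y (fun j => z j.1, fun j => u j.1) else 0) else 0)
            = (if (∀ j : ↥Λ, j ∉ B a → z j = y j) ∧ (∀ j : ↥Λ, j ∉ B a → u j = y j)
               then (if z i ≠ u i then κ a y (fun j => z j.1, fun j => u j.1) else 0) else 0)
          split_ifs <;> rfl
        rw [e1]
        simp only [hcBdef]
        rw [dif_pos h, Fintype.sum_prod_type]
      · simp only [hcBdef]
        rw [dif_neg h]
        refine Finset.sum_eq_zero fun z _ => Finset.sum_eq_zero fun u _ => ?_
        by_cases hC' : (∀ j : ↥Λ, j ∉ B a → z j = y j) ∧ (∀ j : ↥Λ, j ∉ B a → u j = y j)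
        · have hzu : z i = u i := by rw [hC'.1 i h, hC'.2 i h]
          exact if_neg (not_not_intro hzu)
        · rw [if_neg hC', ite_self]
    have hE : ∀ i : ↥Λ,
        (∑ zu : (↥Λ → X) × (↥Λ → X), if zu.1 i ≠ zu.2 i then π zu else 0)
        = (1/N) * ∑ a ∈ C, T a i := by
      intro i
      have hpt : ∀ z u : ↥Λ → X, (if z i ≠ u i then π (z, u) else 0)
          = (1/N) * ∑ a ∈ C, ∑ y : ↥Λ → X, p y *
            (if z i ≠ u i then
              (if (∀ j : ↥Λ, j ∉ B a → z j = y j) ∧ (∀ j : ↥Λ, j ∉ B a → u j = y j)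
               then κ a y (fun j => z j.1, fun j => u j.1) else 0) else 0) := by
        intro z u
        by_cases hne : z i ≠ u i
        · rw [if_pos hne]
          simp only [hπdef]
          rw [Finset.sum_congr rfl fun a _ => Finset.sum_congr rfl fun y _ =>
            congrArg (fun t => p y * t)
              (if_pos hne :
                (if z i ≠ u i then
                  (if (∀ j : ↥Λ, j ∉ B a → z j = y j) ∧ (∀ j : ↥Λ, j ∉ B a → u j = y j)
                   then κ a y (fun j => z j.1, fun j => u j.1) else 0) else 0)
                = _)]
        · rw [if_neg hne]
          have hz : ∀ (a : Site d) (y : ↥Λ → X), p y *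
              (if z i ≠ u i then
                (if (∀ j : ↥Λ, j ∉ B a → z j = y j) ∧ (∀ j : ↥Λ, j ∉ B a → u j = y j)
                 then κ a y (fun j => z j.1, fun j => u j.1) else 0) else 0) = 0 := by
            intro a y
            rw [if_neg hne, mul_zero]
          rw [Finset.sum_congr rfl fun a _ => Finset.sum_congr rfl fun y _ => hz a y]
          simp
      calc (∑ zu : (↥Λ → X) × (↥Λ → X), if zu.1 i ≠ zu.2 i then π zu else 0)
          = ∑ z : ↥Λ → X, ∑ u : ↥Λ → X, (if z i ≠ u i then π (z, u) else 0) :=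
            Fintype.sum_prod_type _
        _ = ∑ z : ↥Λ → X, ∑ u : ↥Λ → X, ((1/N) * ∑ a ∈ C, ∑ y : ↥Λ → X, p y *
            (if z i ≠ u i then
              (if (∀ j : ↥Λ, j ∉ B a → z j = y j) ∧ (∀ j : ↥Λ, j ∉ B a → u j = y j)
               then κ a y (fun j => z j.1, fun j => u j.1) else 0) else 0)) :=
            Finset.sum_congr rfl fun z _ => Finset.sum_congr rfl fun u _ => hpt z u
        _ = (1/N) * ∑ z : ↥Λ → X, ∑ u : ↥Λ → X, ∑ a ∈ C, ∑ y : ↥Λ → X, p y *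
            (if z i ≠ u i then
              (if (∀ j : ↥Λ, j ∉ B a → z j = y j) ∧ (∀ j : ↥Λ, j ∉ B a → u j = y j)
               then κ a y (fun j => z j.1, fun j => u j.1) else 0) else 0) := by
            simp_rw [← Finset.mul_sum]
        _ = (1/N) * ∑ a ∈ C, ∑ y : ↥Λ → X, ∑ z : ↥Λ → X, ∑ u : ↥Λ → X, p y *
            (if z i ≠ u i then
              (if (∀ j : ↥Λ, j ∉ B a → z j = y j) ∧ (∀ j : ↥Λ, j ∉ B a → u j = y j)
               then κ a y (fun j => z j.1, fun j => u j.1) else 0) else 0) := by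
            congr 1
            rw [Finset.sum_congr rfl fun z (_ : z ∈ Finset.univ) =>
              swap3 C (fun (a : Site d) (y u : ↥Λ → X) => p y *
                (if z i ≠ u i then
                  (if (∀ j : ↥Λ, j ∉ B a → z j = y j) ∧ (∀ j : ↥Λ, j ∉ B a → u j = y j)
                   then κ a y (fun j => z j.1, fun j => u j.1) else 0) else 0))]
            rw [swap3 C (fun (a : Site d) (y z : ↥Λ → X) => ∑ u : ↥Λ → X, p y *
              (if z i ≠ u i then
                (if (∀ j : ↥Λ, j ∉ B a → z j = y j) ∧ (∀ j : ↥Λ, j ∉ B a → u j = y j)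
                 then κ a y (fun j => z j.1, fun j => u j.1) else 0) else 0))]
        _ = (1/N) * ∑ a ∈ C, ∑ y : ↥Λ → X, p y * cB a y i := by
            congr 1
            refine Finset.sum_congr rfl fun a _ => Finset.sum_congr rfl fun y _ => ?_
            simp_rw [← Finset.mul_sum]
            rw [hEterm i a y]
        _ = (1/N) * ∑ a ∈ C, T a i := by simp only [hTdef]
    -- Cauchy–Schwarz in the cube index
    have hCS1 : ∀ i : ↥Λ, (∑ a ∈ C, T a i)^2 ≤ (m:ℝ)^d * ∑ a ∈ C, (T a i)^2 := by
      intro i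
      have hT0 : ∀ a ∈ C, T a i ≠ 0 → (i : Site d) ∈ cube m a := by
        intro a _ hne
        by_contra hcube
        apply hne
        simp only [hTdef]
        refine Finset.sum_eq_zero fun y _ => ?_
        have hiB : i ∉ B a := by
          rw [hBdef]
          simp [blockIn, hcube]
        simp only [hcBdef]
        rw [dif_neg hiB, mul_zero]
      have hfil : ∑ a ∈ C, T a i
          = ∑ a ∈ C.filter (fun a => (i : Site d) ∈ cube m a), T a i :=
        (Finset.sum_filter_of_ne hT0).symm
      have hcard : ((C.filter fun a => (i : Site d) ∈ cube m a).card : ℝ) ≤ (m:ℝ)^d := by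
        rw [hCdef]
        exact_mod_cast card_filter_cube m Λ (i : Site d)
      calc (∑ a ∈ C, T a i)^2
          = (∑ a ∈ C.filter (fun a => (i : Site d) ∈ cube m a), T a i)^2 := by rw [hfil]
        _ ≤ ((C.filter fun a => (i : Site d) ∈ cube m a).card : ℝ) *
            ∑ a ∈ C.filter (fun a => (i : Site d) ∈ cube m a), (T a i)^2 :=
            sq_sum_le_card_mul_sum_sq
        _ ≤ (m:ℝ)^d * ∑ a ∈ C, (T a i)^2 :=
            mul_le_mul hcard
              (Finset.sum_le_sum_of_subset_of_nonneg (Finset.filter_subset _ _)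
                (fun a _ _ => sq_nonneg _))
              (Finset.sum_nonneg fun a _ => sq_nonneg _) (le_of_lt hmd)
    -- Cauchy–Schwarz in y
    have hCS2 : ∀ (a : Site d) (i : ↥Λ), (T a i)^2 ≤ ∑ y : ↥Λ → X, p y * (cB a y i)^2 := by
      intro a i
      have hcs := Finset.sum_mul_sq_le_sq_mul_sq Finset.univ
        (fun y : ↥Λ → X => Real.sqrt (p y)) (fun y => Real.sqrt (p y) * cB a y i)
      have e1 : ∀ y : ↥Λ → X,
          Real.sqrt (p y) * (Real.sqrt (p y) * cB a y i) = p y * cB a y i := fun y => by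
        rw [← mul_assoc, Real.mul_self_sqrt (hp0 y)]
      have e2 : ∀ y : ↥Λ → X, Real.sqrt (p y) ^ 2 = p y := fun y => Real.sq_sqrt (hp0 y)
      have e3 : ∀ y : ↥Λ → X, (Real.sqrt (p y) * cB a y i)^2 = p y * (cB a y i)^2 := fun y => by
        rw [mul_pow, e2]
      rw [Finset.sum_congr rfl fun y _ => e1 y, Finset.sum_congr rfl fun y _ => e2 y,
        Finset.sum_congr rfl fun y _ => e3 y, hp1, one_mul] at hcs
      simpa only [hTdef] using hcs
    -- cost of each local coupling
    have hBsum : ∀ (a : Site d) (y : ↥Λ → X),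
        ∑ i : ↥Λ, (cB a y i)^2
        = ∑ j : ↥(B a), (∑ vw : (↥(B a) → X) × (↥(B a) → X),
            if vw.1 j ≠ vw.2 j then κ a y vw else 0) ^ 2 := by
      intro a y
      have e0 : ∀ i : ↥Λ, (cB a y i)^2
          = (if h : i ∈ B a then (∑ vw : (↥(B a) → X) × (↥(B a) → X),
              if vw.1 ⟨i, h⟩ ≠ vw.2 ⟨i, h⟩ then κ a y vw else 0) ^ 2 else 0) := by
        intro i
        simp only [hcBdef]
        by_cases h : i ∈ B a
        · rw [dif_pos h, dif_pos h]
        · rw [dif_neg h, dif_neg h]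
          simp
      rw [Finset.sum_congr rfl fun i _ => e0 i]
      rw [← Finset.sum_subset (Finset.subset_univ (B a)) (fun i _ hi => dif_neg hi)]
      rw [Finset.univ_eq_attach]
      rw [← Finset.sum_attach (B a) (fun i => if h : i ∈ B a then
        (∑ vw : (↥(B a) → X) × (↥(B a) → X),
          if vw.1 ⟨i, h⟩ ≠ vw.2 ⟨i, h⟩ then κ a y vw else 0) ^ 2 else 0)]
      refine Finset.sum_congr rfl fun j _ => ?_
      rw [dif_pos j.2]
    -- put everything together
    refine le_trans (W2sq_le p pG π hπ0 hmarg1 hmarg2) ?_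
    have hmd2 : (0:ℝ) ≤ (m:ℝ)^d * (1/N)^2 :=
      mul_nonneg (le_of_lt hmd) (sq_nonneg _)
    calc (∑ i : ↥Λ, (∑ zu : (↥Λ → X) × (↥Λ → X), if zu.1 i ≠ zu.2 i then π zu else 0) ^ 2)
        = ∑ i : ↥Λ, ((1/N) * ∑ a ∈ C, T a i)^2 :=
          Finset.sum_congr rfl fun i _ => by rw [hE i]
      _ = (1/N)^2 * ∑ i : ↥Λ, (∑ a ∈ C, T a i)^2 := by
          simp_rw [mul_pow]
          rw [← Finset.mul_sum]
      _ ≤ (1/N)^2 * ((m:ℝ)^d * ∑ i : ↥Λ, ∑ a ∈ C, (T a i)^2) := by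
          refine mul_le_mul_of_nonneg_left ?_ (sq_nonneg _)
          rw [Finset.mul_sum]
          exact Finset.sum_le_sum fun i _ => hCS1 i
      _ = ((m:ℝ)^d * (1/N)^2) * ∑ a ∈ C, ∑ i : ↥Λ, (T a i)^2 := by
          rw [Finset.sum_comm]
          ring
      _ ≤ ((m:ℝ)^d * (1/N)^2) * ∑ a ∈ C, ∑ y : ↥Λ → X, p y *
            (W2sq (condF p (B a) y) (condF q (B a) y) + ε) := by
          refine mul_le_mul_of_nonneg_left ?_ hmd2
          refine Finset.sum_le_sum fun a ha => ?_
          calc ∑ i : ↥Λ, (T a i)^2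
              ≤ ∑ i : ↥Λ, ∑ y : ↥Λ → X, p y * (cB a y i)^2 :=
                Finset.sum_le_sum fun i _ => hCS2 a i
            _ = ∑ y : ↥Λ → X, p y * ∑ i : ↥Λ, (cB a y i)^2 := by
                rw [Finset.sum_comm]
                exact Finset.sum_congr rfl fun y _ => (Finset.mul_sum _ _ _).symm
            _ ≤ ∑ y : ↥Λ → X, p y *
                (W2sq (condF p (B a) y) (condF q (B a) y) + ε) := by
                refine Finset.sum_le_sum fun y _ => ?_
                rcases eq_or_lt_of_le (hp0 y) with h0 | h0
                · rw [← h0]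
                  simp
                · refine mul_le_mul_of_nonneg_left ?_ (hp0 y)
                  rw [hBsum a y]
                  exact le_of_lt (hκ a y ⟨ha, h0⟩).2.2
      _ = RHS + ((m:ℝ)^d/N) * ε := by
          have expand : ∀ a ∈ C, (∑ y : ↥Λ → X, p y *
              (W2sq (condF p (B a) y) (condF q (B a) y) + ε))
              = (∑ y : ↥Λ → X, p y * W2sq (condF p (B a) y) (condF q (B a) y)) + ε := by
            intro a _
            simp_rw [mul_add]
            rw [Finset.sum_add_distrib, ← Finset.sum_mul, hp1, one_mul]
          rw [Finset.sum_congr rfl expand, Finset.sum_add_distrib, Finset.sum_const,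
            nsmul_eq_mul, ← hNdef, hRHSdef]
          have hN0 : N ≠ 0 := ne_of_gt hNpos
          field_simp
  have hcpos : 0 < (m:ℝ)^d / N := div_pos hmd hNpos
  refine le_of_forall_pos_le_add fun ε hε => ?_
  calc W2sq p pG ≤ RHS + ((m:ℝ)^d/N) * (ε / ((m:ℝ)^d/N)) := key _ (div_pos hε hcpos)
    _ = RHS + ε := by rw [mul_div_cancel₀ _ (ne_of_gt hcpos)]
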